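/- The big-step and small-step sampling-based semantics coincide: M ⇓ˢ_w G if and only if (M,1,s) ⇒ (G,w,[]). -/

import Mathlib

namespace PLC

/-- Terms of the untyped probabilistic λ-calculus (de Bruijn indices).
`draw D cs` is a draw `D(c⃗)` from distribution identifier `D` with real
parameters `cs`; `prim g cs` is a primitive function application `g(c⃗)`;
`ifte` is the conditional on a (boolean-coded) value; `exc` is `fail`. -/
inductive Tm : Type where
  | const : ℝ → Tm
  | var : ℕ → Tm
  | lam : Tm → Tm
  | app : Tm → Tm → Tm
  | draw : ℕ → List ℝ → Tm
  | prim : ℕ → List ℝ → Tm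
  | ifte : Tm → Tm → Tm → Tm
  | score : Tm → Tm
  | exc : Tm

open Tm

/-- Capture-avoiding substitution of the closed value `V` for variable `k`. -/
def subst (V : Tm) : ℕ → Tm → Tm
  | k, var n => if n = k then V else if k < n then var (n - 1) else var n
  | k, lam M => lam (subst V (k + 1) M)
  | k, app M N => app (subst V k M) (subst V k N)
  | k, ifte A M N => ifte (subst V k A) (subst V k M) (subst V k N)
  | k, score M => score (subst V k M)
  | _, const c => const c
  | _, draw D cs => draw D cs
  | _, prim g cs => prim g cs
  | _, exc => exc

/-- All free variables are `< k`. -/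
def ClosedAt : ℕ → Tm → Prop
  | k, var n => n < k
  | k, lam M => ClosedAt (k + 1) M
  | k, app M N => ClosedAt k M ∧ ClosedAt k N
  | k, ifte A M N => ClosedAt k A ∧ ClosedAt k M ∧ ClosedAt k N
  | k, score M => ClosedAt k M
  | _, const _ => True
  | _, draw _ _ => True
  | _, prim _ _ => True
  | _, exc => True

/-- Closed terms. -/
def Closed (M : Tm) : Prop := ClosedAt 0 M

/-- Closed values: real constants and λ-abstractions. -/
def IsVal (M : Tm) : Prop := (∃ c, M = const c) ∨ (∃ N, M = lam N)

/-- Generalized values: values together with `fail`. -/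
def GVal (M : Tm) : Prop := IsVal M ∨ M = exc

/-- Evaluation contexts `E ::= [·] | E M | (λx.M) E`. -/
inductive Ctx : Type where
  | hole : Ctx
  | appL : Ctx → Tm → Ctx
  | appR : Tm → Ctx → Ctx

/-- Plug a term into the hole of an evaluation context. -/
def plug : Ctx → Tm → Tm
  | .hole, M => M
  | .appL E N, M => app (plug E M) N
  | .appR B E, M => app (lam B) (plug E M)

/-- Composition of evaluation contexts. -/
def comp : Ctx → Ctx → Ctx
  | .hole, E' => E'
  | .appL E N, E' => .appL (comp E E') N
  | .appR B E, E' => .appR B (comp E E')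

def tmTrue : Tm := const 1
def tmFalse : Tm := const 0

/-- Erroneous redexes: `c M`, an `if` whose guard is neither `true` nor
`false`, and a `score` whose argument is not a constant in `(0,1]`. -/
def ErrRedex (M : Tm) : Prop :=
  (∃ c N, M = app (const c) N) ∨
  (∃ A M₁ M₂, M = ifte A M₁ M₂ ∧ A ≠ tmTrue ∧ A ≠ tmFalse) ∨
  (∃ V, M = score V ∧ ¬ ∃ c : ℝ, V = const c ∧ 0 < c ∧ c ≤ 1)

/-- Redexes: `(λx.M) V`, `D(c⃗)`, `g(c⃗)`, `score(c)`, `fail`,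
conditionals, and erroneous redexes. -/
def Redex (M : Tm) : Prop :=
  (∃ B V, M = app (lam B) V ∧ IsVal V) ∨
  (∃ D cs, M = draw D cs) ∨
  (∃ g cs, M = prim g cs) ∨
  (∃ V, M = score V) ∨
  M = exc ∨
  (∃ A M₁ M₂, M = ifte A M₁ M₂) ∨
  ErrRedex M

/-- Deterministic reduction `M →det N`, parametrized by the interpretation
`pr` of primitive function identifiers. -/
inductive Det (pr : ℕ → List ℝ → ℝ) : Tm → Tm → Prop
  | primStep (E : Ctx) (g : ℕ) (cs : List ℝ) :
      Det pr (plug E (prim g cs)) (plug E (const (pr g cs)))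
  | beta (E : Ctx) (B V : Tm) : IsVal V →
      Det pr (plug E (app (lam B) V)) (plug E (subst V 0 B))
  | iteT (E : Ctx) (M N : Tm) :
      Det pr (plug E (ifte tmTrue M N)) (plug E M)
  | iteF (E : Ctx) (M N : Tm) :
      Det pr (plug E (ifte tmFalse M N)) (plug E N)
  | err (E : Ctx) (T : Tm) : ErrRedex T → Det pr (plug E T) (plug E exc)
  | failCtx (E : Ctx) : E ≠ Ctx.hole → Det pr (plug E exc) exc

/-- Small-step sampling-based reduction on configurations `(M, w, s)`,
parametrized by the densities `pf` of distribution identifiers and the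
interpretation `pr` of primitive functions. -/
inductive Step (pf : ℕ → List ℝ → ℝ → ℝ) (pr : ℕ → List ℝ → ℝ) :
    Tm × ℝ × List ℝ → Tm × ℝ × List ℝ → Prop
  | pure {M N : Tm} {w : ℝ} {s : List ℝ} :
      Det pr M N → Step pf pr (M, w, s) (N, w, s)
  | random {E : Ctx} {D : ℕ} {cs : List ℝ} {c w : ℝ} {s : List ℝ} :
      0 < pf D cs c →
      Step pf pr (plug E (draw D cs), w, c :: s)
        (plug E (const c), w * pf D cs c, s)
  | randomFail {E : Ctx} {D : ℕ} {cs : List ℝ} {c w : ℝ} {s : List ℝ} :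
      pf D cs c = 0 →
      Step pf pr (plug E (draw D cs), w, c :: s) (plug E exc, 0, s)
  | scoreStep {E : Ctx} {c w : ℝ} {s : List ℝ} : 0 < c → c ≤ 1 →
      Step pf pr (plug E (score (const c)), w, s)
        (plug E (const 1), c * w, s)

/-- Multi-step sampling-based reduction. -/
def Steps (pf : ℕ → List ℝ → ℝ → ℝ) (pr : ℕ → List ℝ → ℝ) :
    Tm × ℝ × List ℝ → Tm × ℝ × List ℝ → Prop :=
  Relation.ReflTransGen (Step pf pr)

/-- Big-step sampling-based evaluation `M ⇓^s_w G`. -/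
inductive Eval (pf : ℕ → List ℝ → ℝ → ℝ) (pr : ℕ → List ℝ → ℝ) :
    Tm → List ℝ → ℝ → Tm → Prop
  | val {G : Tm} : GVal G → Eval pf pr G [] 1 G
  | random {D : ℕ} {cs : List ℝ} {c : ℝ} : 0 < pf D cs c →
      Eval pf pr (draw D cs) [c] (pf D cs c) (const c)
  | randomFail {D : ℕ} {cs : List ℝ} {c : ℝ} : pf D cs c = 0 →
      Eval pf pr (draw D cs) [c] 0 exc
  | primE {g : ℕ} {cs : List ℝ} :
      Eval pf pr (prim g cs) [] 1 (const (pr g cs))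
  | appl {M N P V G : Tm} {s₁ s₂ s₃ : List ℝ} {w₁ w₂ w₃ : ℝ} :
      Eval pf pr M s₁ w₁ (lam P) → Eval pf pr N s₂ w₂ V → IsVal V →
      Eval pf pr (subst V 0 P) s₃ w₃ G →
      Eval pf pr (app M N) (s₁ ++ s₂ ++ s₃) (w₁ * w₂ * w₃) G
  | applRaise1 {M N : Tm} {s : List ℝ} {w : ℝ} :
      Eval pf pr M s w exc → Eval pf pr (app M N) s w exc
  | applRaise2 {M N : Tm} {c : ℝ} {s : List ℝ} {w : ℝ} :
      Eval pf pr M s w (const c) → Eval pf pr (app M N) s w exc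
  | applRaise3 {M N P : Tm} {s₁ s₂ : List ℝ} {w₁ w₂ : ℝ} :
      Eval pf pr M s₁ w₁ (lam P) → Eval pf pr N s₂ w₂ exc →
      Eval pf pr (app M N) (s₁ ++ s₂) (w₁ * w₂) exc
  | iteT {M N G : Tm} {s : List ℝ} {w : ℝ} :
      Eval pf pr M s w G → Eval pf pr (ifte tmTrue M N) s w G
  | iteF {M N G : Tm} {s : List ℝ} {w : ℝ} :
      Eval pf pr N s w G → Eval pf pr (ifte tmFalse M N) s w G
  | scoreE {c : ℝ} : 0 < c → c ≤ 1 →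
      Eval pf pr (score (const c)) [] c (const 1)
  | failE {T : Tm} : ErrRedex T → Eval pf pr T [] 1 exc

section Aux

variable (pf : ℕ → List ℝ → ℝ → ℝ) (pr : ℕ → List ℝ → ℝ)

theorem plug_comp (E E' : Ctx) (M : Tm) :
    plug (comp E E') M = plug E (plug E' M) := by
  induction E <;> simp [comp, plug, *]

theorem excSteps (E : Ctx) (w : ℝ) (t : List ℝ) :
    Steps pf pr (plug E exc, w, t) (exc, w, t) := by
  cases E with
  | hole => exact Relation.ReflTransGen.refl
  | appL E N =>
      exact Relation.ReflTransGen.single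
        (Step.pure (Det.failCtx _ (fun h => Ctx.noConfusion h)))
  | appR B E =>
      exact Relation.ReflTransGen.single
        (Step.pure (Det.failCtx _ (fun h => Ctx.noConfusion h)))

theorem val_inv {V : Tm} (hV : IsVal V) {s : List ℝ} {v : ℝ} {G : Tm}
    (h : Eval pf pr V s v G) : s = [] ∧ v = 1 ∧ G = V := by
  rcases hV with ⟨c, rfl⟩ | ⟨N, rfl⟩
  all_goals
    cases h with
    | val _ => exact ⟨rfl, rfl, rfl⟩
    | failE hT =>
        rcases hT with ⟨c', N', hEq⟩ | ⟨A, M₁, M₂, hEq, _, _⟩ | ⟨V', hEq, _⟩ <;>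
          exact Tm.noConfusion hEq

theorem exc_inv {s : List ℝ} {v : ℝ} {G : Tm}
    (h : Eval pf pr exc s v G) : s = [] ∧ v = 1 ∧ G = exc := by
  cases h with
  | val _ => exact ⟨rfl, rfl, rfl⟩
  | failE _ => exact ⟨rfl, rfl, rfl⟩

theorem exc_plug (E : Ctx) {M : Tm} {s : List ℝ} {v : ℝ}
    (h : Eval pf pr M s v exc) : Eval pf pr (plug E M) s v exc := by
  induction E with
  | hole => exact h
  | appL E N ih => exact Eval.applRaise1 ih
  | appR B E ih => simpa [plug] using Eval.applRaise3 (Eval.val (Or.inl (Or.inr ⟨B, rfl⟩))) ih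

theorem excplug_inv : ∀ (E : Ctx) {s : List ℝ} {v : ℝ} {G : Tm},
    Eval pf pr (plug E exc) s v G → s = [] ∧ v = 1 ∧ G = exc := by
  intro E
  induction E with
  | hole => intro s v G h; exact exc_inv pf pr h
  | appL E N ih =>
      intro s v G h
      cases h with
      | appl hA hB hV hC => rcases ih hA with ⟨-, -, hc⟩; exact Tm.noConfusion hc
      | applRaise1 hA => rcases ih hA with ⟨rfl, rfl, -⟩; exact ⟨rfl, rfl, rfl⟩
      | applRaise2 hA => rcases ih hA with ⟨-, -, hc⟩; exact Tm.noConfusion hc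
      | applRaise3 hA hB => rcases ih hA with ⟨-, -, hc⟩; exact Tm.noConfusion hc
      | failE _ => exact ⟨rfl, rfl, rfl⟩
      | val hGV =>
          rcases hGV with (⟨c, hc⟩ | ⟨P, hc⟩) | hc <;> exact Tm.noConfusion hc
  | appR B E ih =>
      intro s v G h
      cases h with
      | appl hA hB hV hC =>
          rcases ih hB with ⟨-, -, rfl⟩
          rcases hV with ⟨c, hc⟩ | ⟨Q, hc⟩ <;> exact Tm.noConfusion hc
      | applRaise1 hA =>
          rcases val_inv pf pr (Or.inr ⟨B, rfl⟩) hA with ⟨-, -, hc⟩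
          exact Tm.noConfusion hc
      | applRaise2 hA =>
          rcases val_inv pf pr (Or.inr ⟨B, rfl⟩) hA with ⟨-, -, hc⟩
          exact Tm.noConfusion hc
      | applRaise3 hA hB =>
          rcases val_inv pf pr (Or.inr ⟨B, rfl⟩) hA with ⟨rfl, rfl, -⟩
          rcases ih hB with ⟨rfl, rfl, -⟩
          simp
      | failE _ => exact ⟨rfl, rfl, rfl⟩
      | val hGV =>
          rcases hGV with (⟨c, hc⟩ | ⟨P, hc⟩) | hc <;> exact Tm.noConfusion hc

theorem ctx_eval {R' R : Tm} {s₀ : List ℝ} {v₀ : ℝ}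
    (H : ∀ s v G, Eval pf pr R' s v G → Eval pf pr R (s₀ ++ s) (v₀ * v) G) :
    ∀ (E : Ctx) {s : List ℝ} {v : ℝ} {G : Tm},
      Eval pf pr (plug E R') s v G →
      Eval pf pr (plug E R) (s₀ ++ s) (v₀ * v) G := by
  intro E
  induction E with
  | hole => intro s v G h; exact H s v G h
  | appL E N ih =>
      intro s v G h
      cases h with
      | appl hA hB hV hC => simpa [mul_assoc, plug] using Eval.appl (ih hA) hB hV hC
      | applRaise1 hA => exact Eval.applRaise1 (ih hA)
      | applRaise2 hA => exact Eval.applRaise2 (ih hA)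
      | applRaise3 hA hB => simpa [mul_assoc, plug] using Eval.applRaise3 (ih hA) hB
      | failE hT =>
          rcases hT with ⟨c, N', hEq⟩ | ⟨A, M₁, M₂, hEq, _, _⟩ | ⟨V', hEq, _⟩
          · injection hEq with h1 h2
            subst h2
            cases E with
            | hole =>
                simp only [plug] at h1 ⊢
                subst h1
                simpa using Eval.applRaise2 (H [] 1 (const c) (Eval.val (Or.inl (Or.inl ⟨c, rfl⟩))))
            | appL E' N₂ => exact absurd h1 (by simp [plug])
            | appR B' E' => exact absurd h1 (by simp [plug])
          · exact Tm.noConfusion hEq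
          · exact Tm.noConfusion hEq
      | val hGV =>
          rcases hGV with (⟨c, hc⟩ | ⟨P, hc⟩) | hc <;> exact Tm.noConfusion hc
  | appR B E ih =>
      intro s v G h
      cases h with
      | appl hA hB hV hC =>
          rcases val_inv pf pr (Or.inr ⟨B, rfl⟩) hA with ⟨rfl, rfl, hPB⟩
          injection hPB with hPB
          subst hPB
          simpa [mul_assoc, plug] using Eval.appl hA (ih hB) hV hC
      | applRaise1 hA =>
          rcases val_inv pf pr (Or.inr ⟨B, rfl⟩) hA with ⟨-, -, hc⟩
          exact Tm.noConfusion hc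
      | applRaise2 hA =>
          rcases val_inv pf pr (Or.inr ⟨B, rfl⟩) hA with ⟨-, -, hc⟩
          exact Tm.noConfusion hc
      | applRaise3 hA hB =>
          rcases val_inv pf pr (Or.inr ⟨B, rfl⟩) hA with ⟨rfl, rfl, -⟩
          simpa [plug] using Eval.applRaise3 hA (ih hB)
      | failE hT =>
          rcases hT with ⟨c, N', hEq⟩ | ⟨A, M₁, M₂, hEq, _, _⟩ | ⟨V', hEq, _⟩
          · injection hEq with h1 h2; exact Tm.noConfusion h1
          · exact Tm.noConfusion hEq
          · exact Tm.noConfusion hEq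
      | val hGV =>
          rcases hGV with (⟨c, hc⟩ | ⟨P, hc⟩) | hc <;> exact Tm.noConfusion hc

theorem expand_det {M N : Tm} (hd : Det pr M N) {s : List ℝ} {v : ℝ} {G : Tm}
    (h : Eval pf pr N s v G) : Eval pf pr M s v G := by
  cases hd with
  | primStep E g cs =>
      have := ctx_eval pf pr (R' := const (pr g cs)) (R := prim g cs)
        (s₀ := []) (v₀ := 1)
        (fun s v G hh => by
          rcases val_inv pf pr (Or.inl ⟨_, rfl⟩) hh with ⟨rfl, rfl, rfl⟩
          simpa using Eval.primE) E h
      simpa using this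
  | beta E B V hV =>
      have := ctx_eval pf pr (R' := subst V 0 B) (R := app (lam B) V)
        (s₀ := []) (v₀ := 1)
        (fun s v G hh => by
          simpa using Eval.appl (Eval.val (Or.inl (Or.inr ⟨B, rfl⟩)))
            (Eval.val (Or.inl hV)) hV hh) E h
      simpa using this
  | iteT E M' N' =>
      have := ctx_eval pf pr (R' := M') (R := ifte tmTrue M' N')
        (s₀ := []) (v₀ := 1)
        (fun s v G hh => by simpa using Eval.iteT (N := N') hh) E h
      simpa using this
  | iteF E M' N' =>
      have := ctx_eval pf pr (R' := N') (R := ifte tmFalse M' N')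
        (s₀ := []) (v₀ := 1)
        (fun s v G hh => by simpa using Eval.iteF (M := M') hh) E h
      simpa using this
  | err E T hT =>
      have := ctx_eval pf pr (R' := exc) (R := T) (s₀ := []) (v₀ := 1)
        (fun s v G hh => by
          rcases exc_inv pf pr hh with ⟨rfl, rfl, rfl⟩
          simpa using Eval.failE hT) E h
      simpa using this
  | failCtx E hne =>
      rcases exc_inv pf pr h with ⟨rfl, rfl, rfl⟩
      exact exc_plug pf pr E (Eval.val (Or.inr rfl))

theorem fwd {M : Tm} {s : List ℝ} {w : ℝ} {G : Tm} (h : Eval pf pr M s w G) :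
    ∀ (E : Ctx) (w₀ : ℝ) (t : List ℝ),
      Steps pf pr (plug E M, w₀, s ++ t) (plug E G, w₀ * w, t) ∨
        (G = exc ∧ Steps pf pr (plug E M, w₀, s ++ t) (exc, w₀ * w, t)) := by
  induction h with
  | @val G hGV =>
      intro E w₀ t
      rcases hGV with hV | rfl
      · left
        simp only [List.nil_append, mul_one]
        exact Relation.ReflTransGen.refl
      · right
        refine ⟨rfl, ?_⟩
        simp only [List.nil_append, mul_one]
        exact excSteps pf pr E w₀ t
  | @random D cs c hpf =>
      intro E w₀ t; left
      exact Relation.ReflTransGen.single (Step.random hpf)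
  | @randomFail D cs c hpf =>
      intro E w₀ t; right
      refine ⟨rfl, ?_⟩
      rw [mul_zero]
      exact (Relation.ReflTransGen.single (Step.randomFail hpf)).trans
        (excSteps pf pr E 0 t)
  | @primE g cs =>
      intro E w₀ t; left
      simp only [List.nil_append, mul_one]
      exact Relation.ReflTransGen.single (Step.pure (Det.primStep E g cs))
  | @appl M N P V G s₁ s₂ s₃ w₁ w₂ w₃ hM hN hV hsub ihM ihN ihsub =>
      intro E w₀ t
      rw [show w₀ * (w₁ * w₂ * w₃) = w₀ * w₁ * w₂ * w₃ by ring]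
      simp only [List.append_assoc]
      have h1' := ihM (comp E (.appL .hole N)) w₀ (s₂ ++ (s₃ ++ t))
      rcases h1' with h1 | ⟨hc, -⟩
      swap
      · exact absurd hc (fun hc => Tm.noConfusion hc)
      simp only [plug_comp, plug] at h1
      have h2' := ihN (comp E (.appR P .hole)) (w₀ * w₁) (s₃ ++ t)
      rcases h2' with h2 | ⟨hc, -⟩
      swap
      · subst hc; rcases hV with ⟨c, hc⟩ | ⟨Q, hc⟩ <;> exact Tm.noConfusion hc
      simp only [plug_comp, plug] at h2
      have h3 : Steps pf pr (plug E (app (lam P) V), w₀ * w₁ * w₂, s₃ ++ t)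
          (plug E (subst V 0 P), w₀ * w₁ * w₂, s₃ ++ t) :=
        Relation.ReflTransGen.single (Step.pure (Det.beta E P V hV))
      have h4' := ihsub E (w₀ * w₁ * w₂) t
      rcases h4' with h4 | ⟨rfl, h4⟩
      · exact Or.inl (((h1.trans h2).trans h3).trans h4)
      · exact Or.inr ⟨rfl, ((h1.trans h2).trans h3).trans h4⟩
  | @applRaise1 M N s₁ w₁ hM ihM =>
      intro E w₀ t; right
      refine ⟨rfl, ?_⟩
      have h1' := ihM (comp E (.appL .hole N)) w₀ t
      have h1 : Steps pf pr (plug (comp E (.appL .hole N)) M, w₀, s₁ ++ t)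
          (exc, w₀ * w₁, t) := by
        rcases h1' with h1 | ⟨-, h1⟩
        · exact h1.trans (excSteps pf pr _ _ t)
        · exact h1
      simpa only [plug_comp, plug] using h1
  | @applRaise2 M N c s₁ w₁ hM ihM =>
      intro E w₀ t; right
      refine ⟨rfl, ?_⟩
      have h1' := ihM (comp E (.appL .hole N)) w₀ t
      rcases h1' with h1 | ⟨hc, -⟩
      swap
      · exact absurd hc (fun hc => Tm.noConfusion hc)
      simp only [plug_comp, plug] at h1
      refine h1.trans ?_
      refine (Relation.ReflTransGen.single
        (Step.pure (Det.err E (app (const c) N) (Or.inl ⟨c, N, rfl⟩)))).trans ?_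
      exact excSteps pf pr E _ t
  | @applRaise3 M N P s₁ s₂ w₁ w₂ hM hN ihM ihN =>
      intro E w₀ t; right
      refine ⟨rfl, ?_⟩
      rw [show w₀ * (w₁ * w₂) = w₀ * w₁ * w₂ by ring]
      simp only [List.append_assoc]
      have h1' := ihM (comp E (.appL .hole N)) w₀ (s₂ ++ t)
      rcases h1' with h1 | ⟨hc, -⟩
      swap
      · exact absurd hc (fun hc => Tm.noConfusion hc)
      simp only [plug_comp, plug] at h1
      have h2' := ihN (comp E (.appR P .hole)) (w₀ * w₁) t
      have h2 : Steps pf pr (plug (comp E (.appR P .hole)) N, w₀ * w₁, s₂ ++ t)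
          (exc, w₀ * w₁ * w₂, t) := by
        rcases h2' with h2 | ⟨-, h2⟩
        · exact h2.trans (excSteps pf pr _ _ t)
        · exact h2
      simp only [plug_comp, plug] at h2
      exact h1.trans h2
  | @iteT M N G s₁ w₁ hM ih =>
      intro E w₀ t
      have h0 : Steps pf pr (plug E (ifte tmTrue M N), w₀, s₁ ++ t)
          (plug E M, w₀, s₁ ++ t) :=
        Relation.ReflTransGen.single (Step.pure (Det.iteT E M N))
      rcases ih E w₀ t with h | ⟨rfl, h⟩
      · exact Or.inl (h0.trans h)
      · exact Or.inr ⟨rfl, h0.trans h⟩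
  | @iteF M N G s₁ w₁ hN ih =>
      intro E w₀ t
      have h0 : Steps pf pr (plug E (ifte tmFalse M N), w₀, s₁ ++ t)
          (plug E N, w₀, s₁ ++ t) :=
        Relation.ReflTransGen.single (Step.pure (Det.iteF E M N))
      rcases ih E w₀ t with h | ⟨rfl, h⟩
      · exact Or.inl (h0.trans h)
      · exact Or.inr ⟨rfl, h0.trans h⟩
  | @scoreE c hc hc1 =>
      intro E w₀ t; left
      rw [show w₀ * c = c * w₀ by ring]
      exact Relation.ReflTransGen.single (Step.scoreStep hc hc1)
  | @failE T hT =>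
      intro E w₀ t; right
      refine ⟨rfl, ?_⟩
      rw [mul_one]
      exact (Relation.ReflTransGen.single (Step.pure (Det.err E T hT))).trans
        (excSteps pf pr E w₀ t)

theorem bwd {G : Tm} {w : ℝ} (hG : GVal G) :
    ∀ {a : Tm × ℝ × List ℝ}, Steps pf pr a (G, w, []) →
      ∃ v, Eval pf pr a.1 a.2.2 v G ∧ w = a.2.1 * v := by
  intro a h
  induction h using Relation.ReflTransGen.head_induction_on with
  | refl => exact ⟨1, Eval.val hG, (mul_one w).symm⟩
  | head hstep _ ih =>
      obtain ⟨v, hv, hw⟩ := ih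
      cases hstep with
      | pure hd => exact ⟨v, expand_det pf pr hd hv, hw⟩
      | @random E D cs c w₁ s₁ hpf =>
          refine ⟨pf D cs c * v, ?_, by rw [hw]; ring⟩
          have := ctx_eval pf pr (R' := const c) (R := draw D cs)
            (s₀ := [c]) (v₀ := pf D cs c)
            (fun s v G hh => by
              rcases val_inv pf pr (Or.inl ⟨_, rfl⟩) hh with ⟨rfl, rfl, rfl⟩
              simpa using Eval.random hpf) E hv
          simpa using this
      | @randomFail E D cs c w₁ s₁ hpf =>
          obtain ⟨rfl, rfl, rfl⟩ := excplug_inv pf pr E hv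
          exact ⟨0, exc_plug pf pr E (Eval.randomFail hpf), by rw [hw]; ring⟩
      | @scoreStep E c w₁ s₁ hc hc1 =>
          refine ⟨c * v, ?_, by rw [hw]; ring⟩
          have := ctx_eval pf pr (R' := const 1) (R := score (const c))
            (s₀ := []) (v₀ := c)
            (fun s v G hh => by
              rcases val_inv pf pr (Or.inl ⟨_, rfl⟩) hh with ⟨rfl, rfl, rfl⟩
              simpa using Eval.scoreE hc hc1) E hv
          simpa using this

end Aux

end PLC

/-- The big-step and small-step sampling-based semantics coincide:
`M ⇓ˢ_w G` if and only if `(M,1,s) ⇒ (G,w,[])`, for closed `M` and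
generalized values `G`. -/
theorem PLC.bigstep_iff_smallstep (pf : ℕ → List ℝ → ℝ → ℝ)
    (pr : ℕ → List ℝ → ℝ) {M G : PLC.Tm} {s : List ℝ} {w : ℝ}
    (hM : PLC.Closed M) (hG : PLC.GVal G) :
    PLC.Eval pf pr M s w G ↔
      PLC.Steps pf pr (M, (1 : ℝ), s) (G, w, []) := by
  constructor
  · intro h
    rcases PLC.fwd pf pr h PLC.Ctx.hole 1 [] with h' | ⟨rfl, h'⟩ <;>
      simpa [PLC.plug] using h'
  · intro h
    obtain ⟨v, hv, hw⟩ := PLC.bwd pf pr hG h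
    rw [hw, one_mul]
    exact hv
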